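/- The function g(a) = (1/√(2π)) · (1/(a·Φ⁻¹(a))) · e^{-(Φ⁻¹(a))²/2} + 1 is strictly decreasing on the interval (1/2, 1), where Φ is the standard normal CDF. -/

import Mathlib

open MeasureTheory ProbabilityTheory Real Set

/-- Standard normal CDF Φ. -/
noncomputable def stdNormalCDF (t : ℝ) : ℝ := (gaussianReal 0 1 (Iic t)).toReal

/-- Inverse of the standard normal CDF, Φ⁻¹. -/
noncomputable def stdNormalCDFInv : ℝ → ℝ := Function.invFun stdNormalCDF

/-- The theoretical robustness-accuracy tradeoff curve. -/
noncomputable def tradeoffCurve (a : ℝ) : ℝ :=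
  (Real.sqrt (2 * π))⁻¹ * (1 / (a * stdNormalCDFInv a)) *
    Real.exp (-(stdNormalCDFInv a) ^ 2 / 2) + 1

lemma stdNormalCDF_eq (t : ℝ) :
    stdNormalCDF t = ∫ x in Iic t, gaussianPDFReal 0 1 x := by
  rw [stdNormalCDF, gaussianReal_apply_eq_integral 0 one_ne_zero (Iic t),
    ENNReal.toReal_ofReal]
  exact setIntegral_nonneg measurableSet_Iic fun x _ => gaussianPDFReal_nonneg 0 1 x

set_option maxHeartbeats 1000000 in
lemma stdNormalCDF_sub (s t : ℝ) :
    stdNormalCDF t - stdNormalCDF s = ∫ x in s..t, gaussianPDFReal 0 1 x := by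
  rw [stdNormalCDF_eq, stdNormalCDF_eq]
  rw [← intervalIntegral.integral_Iic_sub_Iic (μ := volume) (f := gaussianPDFReal 0 1)
    (a := s) (b := t)
    ((integrable_gaussianPDFReal 0 1).integrableOn)
    ((integrable_gaussianPDFReal 0 1).integrableOn)]

lemma stdNormalCDF_strictMono : StrictMono stdNormalCDF := by
  intro s t hst
  have h := stdNormalCDF_sub s t
  have hpos : 0 < ∫ x in s..t, gaussianPDFReal 0 1 x :=
    intervalIntegral.intervalIntegral_pos_of_pos ((integrable_gaussianPDFReal 0 1).intervalIntegrable)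
      (fun x => gaussianPDFReal_pos 0 1 x one_ne_zero) hst
  linarith

lemma stdNormalCDF_continuous : Continuous stdNormalCDF := by
  have : stdNormalCDF = fun t => (∫ x in (0:ℝ)..t, gaussianPDFReal 0 1 x) + stdNormalCDF 0 := by
    funext t
    have := stdNormalCDF_sub 0 t
    linarith
  rw [this]
  exact (((integrable_gaussianPDFReal 0 1).continuous_primitive 0)).add continuous_const

lemma stdNormalCDF_zero : stdNormalCDF 0 = 1 / 2 := by
  have htot : (∫ x in Iic (0:ℝ), gaussianPDFReal 0 1 x)
      + ∫ x in Ioi (0:ℝ), gaussianPDFReal 0 1 x = 1 := by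
    rw [← integral_gaussianPDFReal_eq_one 0 one_ne_zero]
    exact intervalIntegral.integral_Iic_add_Ioi
      (integrable_gaussianPDFReal 0 1).integrableOn (integrable_gaussianPDFReal 0 1).integrableOn
  have hsym : (∫ x in Iic (0:ℝ), gaussianPDFReal 0 1 x)
      = ∫ x in Ioi (0:ℝ), gaussianPDFReal 0 1 x := by
    have h1 : (∫ x in Iic (0:ℝ), gaussianPDFReal 0 1 (-x))
        = ∫ x in Ioi (-(0:ℝ)), gaussianPDFReal 0 1 x := integral_comp_neg_Iic 0 _
    have h2 : ∀ x : ℝ, gaussianPDFReal 0 1 (-x) = gaussianPDFReal 0 1 x := by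
      intro x; simp [gaussianPDFReal]
    simp only [h2, neg_zero] at h1
    rw [h1]
  rw [stdNormalCDF_eq]
  linarith

lemma stdNormalCDF_surj {a : ℝ} (ha : a ∈ Ioo (1/2 : ℝ) 1) : ∃ t, stdNormalCDF t = a := by
  have hcdf : stdNormalCDF = ProbabilityTheory.cdf (gaussianReal 0 1) := by
    funext t
    rw [ProbabilityTheory.cdf_eq_real, measureReal_def, stdNormalCDF]
  have htop : Filter.Tendsto stdNormalCDF Filter.atTop (nhds 1) := by
    rw [hcdf]; exact ProbabilityTheory.tendsto_cdf_atTop _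
  obtain ⟨T, hT⟩ := (htop.eventually (eventually_gt_nhds ha.2)).exists
  have h0T : (0:ℝ) ≤ T := by
    have : stdNormalCDF 0 < stdNormalCDF T := by rw [stdNormalCDF_zero]; exact ha.1.trans hT
    exact (stdNormalCDF_strictMono.lt_iff_lt.mp this).le
  have hmem : a ∈ Icc (stdNormalCDF 0) (stdNormalCDF T) :=
    ⟨stdNormalCDF_zero ▸ ha.1.le, hT.le⟩
  obtain ⟨t, _, ht⟩ := intermediate_value_Icc h0T stdNormalCDF_continuous.continuousOn hmem
  exact ⟨t, ht⟩

lemma stdNormalCDF_inv_eq {a : ℝ} (ha : a ∈ Ioo (1/2 : ℝ) 1) :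
    stdNormalCDF (stdNormalCDFInv a) = a :=
  Function.invFun_eq (stdNormalCDF_surj ha)

lemma stdNormalCDFInv_pos {a : ℝ} (ha : a ∈ Ioo (1/2 : ℝ) 1) : 0 < stdNormalCDFInv a := by
  have h : stdNormalCDF 0 < stdNormalCDF (stdNormalCDFInv a) := by
    rw [stdNormalCDF_zero, stdNormalCDF_inv_eq ha]; exact ha.1
  exact stdNormalCDF_strictMono.lt_iff_lt.mp h

/-- the tradeoff curve `g` is strictly decreasing on `(1/2, 1)`. -/
theorem stmt8 : StrictAntiOn tradeoffCurve (Ioo (1 / 2 : ℝ) 1) := by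
  intro a ha b hb hab
  have hqa : 0 < stdNormalCDFInv a := stdNormalCDFInv_pos ha
  have hqb : 0 < stdNormalCDFInv b := stdNormalCDFInv_pos hb
  have hq : stdNormalCDFInv a < stdNormalCDFInv b := by
    apply stdNormalCDF_strictMono.lt_iff_lt.mp
    rw [stdNormalCDF_inv_eq ha, stdNormalCDF_inv_eq hb]; exact hab
  have ha0 : 0 < a := lt_trans (by norm_num) ha.1
  have hb0 : 0 < b := lt_trans ha0 hab
  set qa := stdNormalCDFInv a
  set qb := stdNormalCDFInv b
  have hsq : 0 < Real.sqrt (2 * π) := Real.sqrt_pos.mpr (by positivity)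
  unfold tradeoffCurve
  have hd : 0 < a * qa := by positivity
  have hd' : a * qa < b * qb := by
    apply mul_lt_mul' (le_of_lt hab) hq (le_of_lt hqa) (lt_trans ha0 hab)
  have hexp : Real.exp (-qb ^ 2 / 2) < Real.exp (-qa ^ 2 / 2) := by
    apply Real.exp_lt_exp.mpr
    have : qa ^ 2 < qb ^ 2 := by nlinarith
    linarith
  have h1 : (1:ℝ) / (b * qb) < 1 / (a * qa) :=
    one_div_lt_one_div_of_lt hd hd'
  have hpos1 : (0:ℝ) < 1 / (b * qb) := by positivity
  have := mul_lt_mul'' (mul_lt_mul_of_pos_left h1 (inv_pos.mpr hsq)) hexp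
    (by positivity) (le_of_lt (Real.exp_pos _))
  linarith
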